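/- Every element x of the cactus group J₃ can be written in exactly one of the forms x = (s₁₂·s₁₃)ⁿ or x = (s₁₂·s₁₃)ⁿ·s₁₂ for a unique integer n; that is, the expressions (s₁₂·s₁₃)ⁿ and (s₁₂·s₁₃)ᵐ·s₁₂ (n, m ∈ ℤ) enumerate all elements of J₃ without repetition. -/

import Mathlib

/-- Generators of the cactus group `J₃`. -/
inductive CactusGen : Type
  | s12 | s23 | s13
  deriving DecidableEq

open FreeGroup in
/-- Relators of the cactus group `J₃`:
`s₁₂² = s₂₃² = s₁₃² = 1`, `s₁₂·s₁₃ = s₁₃·s₂₃`, `s₂₃·s₁₃ = s₁₃·s₁₂`. -/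
def cactusRels : Set (FreeGroup CactusGen) :=
  { of .s12 * of .s12,
    of .s23 * of .s23,
    of .s13 * of .s13,
    of .s12 * of .s13 * (of .s13 * of .s23)⁻¹,
    of .s23 * of .s13 * (of .s13 * of .s12)⁻¹ }

/-- The cactus group `J₃` as a presented group. -/
abbrev J3 : Type := PresentedGroup cactusRels

def s12 : J3 := PresentedGroup.of .s12
def s23 : J3 := PresentedGroup.of .s23
def s13 : J3 := PresentedGroup.of .s13

lemma rel_one (r : FreeGroup CactusGen) (hr : r ∈ cactusRels) :
    PresentedGroup.mk cactusRels r = 1 :=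
  (QuotientGroup.eq_one_iff r).2 (Subgroup.subset_normalClosure hr)

lemma h12 : s12 * s12 = 1 := by
  exact rel_one (FreeGroup.of .s12 * FreeGroup.of .s12) (by left; rfl)

lemma h13 : s13 * s13 = 1 := by
  exact rel_one (FreeGroup.of .s13 * FreeGroup.of .s13) (by right; right; left; rfl)

lemma h23 : s23 * s23 = 1 := by
  exact rel_one (FreeGroup.of .s23 * FreeGroup.of .s23) (by right; left; rfl)

lemma hrel1 : s12 * s13 = s13 * s23 := by
  have := rel_one (FreeGroup.of .s12 * FreeGroup.of .s13 * (FreeGroup.of .s13 * FreeGroup.of .s23)⁻¹)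
    (by right; right; right; left; rfl)
  simp only [map_mul, map_inv] at this
  exact mul_inv_eq_one.mp (by simpa [mul_assoc, s12, s13, s23, PresentedGroup.of] using this)

lemma hrel2 : s23 * s13 = s13 * s12 := by
  have := rel_one (FreeGroup.of .s23 * FreeGroup.of .s13 * (FreeGroup.of .s13 * FreeGroup.of .s12)⁻¹)
    (by right; right; right; right; rfl)
  simp only [map_mul, map_inv] at this
  exact mul_inv_eq_one.mp (by simpa [mul_assoc, s12, s13, s23, PresentedGroup.of] using this)

lemma inv12 : s12⁻¹ = s12 := inv_eq_of_mul_eq_one_right h12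
lemma inv13 : s13⁻¹ = s13 := inv_eq_of_mul_eq_one_right h13

lemma conj_r : s12 * (s12 * s13) * s12⁻¹ = (s12 * s13)⁻¹ := by
  rw [mul_inv_rev, inv12, inv13]
  have c12 : ∀ x : J3, s12 * (s12 * x) = x := fun x => by rw [← mul_assoc, h12, one_mul]
  simp [mul_assoc, c12]

lemma conj_r_zpow (n : ℤ) : s12 * (s12 * s13) ^ n * s12⁻¹ = (s12 * s13) ^ (-n) := by
  have := map_zpow (MulAut.conj s12) (s12 * s13) n
  simp only [MulAut.conj_apply] at this
  rw [this, conj_r, inv_zpow, zpow_neg]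

lemma s12_r_zpow (n : ℤ) : s12 * (s12 * s13) ^ n = (s12 * s13) ^ (-n) * s12 := by
  have := conj_r_zpow n
  rw [inv12] at this
  calc s12 * (s12 * s13) ^ n = (s12 * (s12 * s13) ^ n * s12) * s12 := by
        rw [mul_assoc, h12, mul_one]
    _ = (s12 * s13) ^ (-n) * s12 := by rw [this]

lemma s13_form : s13 = (s12 * s13) ^ (-1 : ℤ) * s12 := by
  rw [zpow_neg_one, mul_inv_rev, inv12, inv13, mul_assoc, h12, mul_one]

lemma s23_form : s23 = (s12 * s13) ^ (-2 : ℤ) * s12 := by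
  have e : s13 * (s12 * s13) = s23 := by rw [hrel1, ← mul_assoc, h13, one_mul]
  rw [← e]
  have h2 : ((s12 * s13) ^ (-2 : ℤ) : J3) = (s12 * s13)⁻¹ * (s12 * s13)⁻¹ := by
    rw [← zpow_neg_one, ← zpow_add]; norm_num
  rw [h2, mul_inv_rev, inv12, inv13]
  have _h := h12
  have c12 : ∀ x : J3, s12 * (s12 * x) = x := fun x => by rw [← mul_assoc, h12, one_mul]
  simp [mul_assoc, c12, h12]

-- the hom to the infinite dihedral group
open DihedralGroup in
def gmap : CactusGen → DihedralGroup 0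
  | .s12 => sr 0
  | .s23 => sr 2
  | .s13 => sr 1

open DihedralGroup in
lemma gmap_rels : ∀ r ∈ cactusRels, FreeGroup.lift gmap r = 1 := by
  intro r hr
  rcases hr with h | h | h | h | h <;> subst h <;>
    simp [gmap, sr_mul_sr, r_mul_sr, sr_mul_r] <;> try decide

def f : J3 →* DihedralGroup 0 := PresentedGroup.toGroup gmap_rels

open DihedralGroup in
lemma r_one_zpow : ∀ n : ℤ, (r 1 : DihedralGroup 0) ^ n = r n := by
  intro n
  exact DihedralGroup.r_one_zpow n

open DihedralGroup in
lemma f_form (n : ℤ) (b : Bool) :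
    f ((s12 * s13) ^ n * (cond b s12 1)) = cond b (sr (-n)) (r n) := by
  have f12 : f s12 = sr 0 := PresentedGroup.toGroup.of gmap_rels
  have f13 : f s13 = sr 1 := PresentedGroup.toGroup.of gmap_rels
  have fr : f (s12 * s13) = r 1 := by rw [map_mul, f12, f13, sr_mul_sr]; norm_num
  cases b <;> simp [map_mul, map_zpow, fr, _root_.r_one_zpow, f12, r_mul_sr] <;> rfl


/-- every element of `J₃` is of exactly one of the forms `(s₁₂·s₁₃)ⁿ` or
`(s₁₂·s₁₃)ⁿ·s₁₂`, for a unique integer `n`. -/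
theorem J3_normal_form :
    ∀ x : J3, ∃! p : ℤ × Bool, x = (s12 * s13) ^ p.1 * (cond p.2 s12 1) := by
  intro x
  -- existence
  have hex : ∃ p : ℤ × Bool, x = (s12 * s13) ^ p.1 * (cond p.2 s12 1) := by
    let H : Subgroup J3 :=
      { carrier := {x | ∃ p : ℤ × Bool, x = (s12 * s13) ^ p.1 * (cond p.2 s12 1)}
        one_mem' := ⟨(0, false), by simp⟩
        mul_mem' := by
          rintro a b ⟨⟨n, bn⟩, rfl⟩ ⟨⟨m, bm⟩, rfl⟩
          cases bn
          · cases bm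
            · exact ⟨(n + m, false), by simp [zpow_add, mul_assoc]⟩
            · exact ⟨(n + m, true), by simp [zpow_add, mul_assoc]⟩
          · cases bm
            · refine ⟨(n - m, true), ?_⟩
              simp only [cond_true, cond_false, mul_one]
              rw [mul_assoc, s12_r_zpow, ← mul_assoc, ← zpow_add]
              ring_nf
            · refine ⟨(n - m, false), ?_⟩
              simp only [cond_true, cond_false, mul_one]
              rw [mul_assoc, ← mul_assoc s12, s12_r_zpow, mul_assoc, h12, mul_one,
                ← zpow_add]
              ring_nf
        inv_mem' := by
          rintro a ⟨⟨n, bn⟩, rfl⟩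
          cases bn
          · exact ⟨(-n, false), by simp⟩
          · refine ⟨(n, true), ?_⟩
            simp only [cond_true, mul_inv_rev, inv12, ← zpow_neg]
            rw [s12_r_zpow]; ring_nf }
    refine PresentedGroup.generated_by cactusRels H ?_ x
    intro j
    cases j
    · exact ⟨(0, true), by simp [s12]⟩
    · exact ⟨(-2, true), by simpa [s23] using s23_form⟩
    · exact ⟨(-1, true), by simpa [s13] using s13_form⟩
  obtain ⟨p, hp⟩ := hex
  refine ⟨p, hp, ?_⟩
  rintro ⟨m, c⟩ hq
  obtain ⟨n, b⟩ := p
  rw [hq] at hp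
  have := congrArg f hp
  rw [f_form, f_form] at this
  cases b <;> cases c <;> simp_all
  · exact DihedralGroup.r.inj this
  · have h := DihedralGroup.sr.inj this
    change -m = -n at h
    omega
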